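/- Let n ≥ 3 and let S be any set of r vertical edges of G_n, where 0 ≤ r ≤ n, and let G_n^r be the graph obtained from G_n by deleting the edges in S. Then the characteristic polynomial of the Laplacian matrix of G_n^r over ℝ factors as char(L(G_n^r)) = (X − 4)^r · (X − 6)^{n−r} · ∏_{i=0}^{n−1} (X − 8·sin²(iπ/n)). In particular the Laplacian eigenvalues of G_n^r are 0, 8·sin²(iπ/n) for i = 1, …, n−1, 4 with multiplicity r, and 6 with multiplicity n−r, independently of the choice of S. -/

import Mathlib

open Polynomial

/-- The graph `G_n = P₂ ⊠ C_n`: vertex set `(ZMod n) × Fin 2`, where two distinct vertices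
`(i,a)` and `(j,b)` are adjacent iff `i = j` or `i = j + 1` or `j = i + 1` in `ZMod n`. -/
def Gn (n : ℕ) : SimpleGraph (ZMod n × Fin 2) where
  Adj x y := x ≠ y ∧ (x.1 = y.1 ∨ x.1 = y.1 + 1 ∨ y.1 = x.1 + 1)
  symm := by
    constructor
    rintro x y ⟨hne, h | h | h⟩
    · exact ⟨hne.symm, Or.inl h.symm⟩
    · exact ⟨hne.symm, Or.inr (Or.inr h)⟩
    · exact ⟨hne.symm, Or.inr (Or.inl h)⟩
  loopless := by constructor; rintro x ⟨hne, -⟩; exact hne rfl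

instance (n : ℕ) : DecidableRel (Gn n).Adj :=
  fun _ _ => inferInstanceAs (Decidable (_ ∧ _))

/-- Deleting a set of edges from `G_n` keeps adjacency decidable (classically). -/
noncomputable instance (n : ℕ) (s : Set (Sym2 (ZMod n × Fin 2))) :
    DecidableRel ((Gn n).deleteEdges s).Adj :=
  Classical.decRel _

set_option linter.unusedSectionVars false
set_option maxHeartbeats 1000000


section MatrixAux

open Matrix

variable {m : Type*} [Fintype m] [DecidableEq m] {R : Type*} [CommRing R]

lemma aux_charpoly_conj (P Q M : Matrix m m R) (h : Q * P = 1) :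
    (Q * M * P).charpoly = M.charpoly := by
  have hQP : (C : R →+* R[X]).mapMatrix Q * (C : R →+* R[X]).mapMatrix P = 1 := by
    rw [← _root_.map_mul, h, _root_.map_one]
  have key : charmatrix (Q * M * P) =
      (C : R →+* R[X]).mapMatrix Q * charmatrix M * (C : R →+* R[X]).mapMatrix P := by
    unfold charmatrix
    rw [Matrix.mul_sub, Matrix.sub_mul]
    congr 1
    · rw [Matrix.mul_assoc,
        (Matrix.scalar_commute (X : R[X]) (fun r' => Commute.all _ _) _).eq,
        ← Matrix.mul_assoc, hQP, Matrix.one_mul]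
    · rw [← _root_.map_mul, ← _root_.map_mul]
  have hdet : ((C : R →+* R[X]).mapMatrix Q).det * ((C : R →+* R[X]).mapMatrix P).det = 1 := by
    rw [← Matrix.det_mul, hQP, Matrix.det_one]
  rw [Matrix.charpoly, key, Matrix.det_mul, Matrix.det_mul, Matrix.charpoly,
    mul_right_comm, hdet, one_mul]

lemma aux_charpoly_diagonal (d : m → R) :
    (Matrix.diagonal d).charpoly = ∏ i, (X - C (d i)) := by
  have h : charmatrix (Matrix.diagonal d) = Matrix.diagonal fun i => X - C (d i) := by
    ext i j
    by_cases h : i = j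
    · subst h; simp
    · simp [Matrix.diagonal_apply_ne _ h, charmatrix_apply_ne _ _ _ h]
  rw [Matrix.charpoly, h, Matrix.det_diagonal]

end MatrixAux


section GraphAux

variable {n : ℕ} [NeZero n] (hn : 3 ≤ n) {S : Finset (Sym2 (ZMod n × Fin 2))}
variable (hS : ∀ e ∈ S, ∃ i : ZMod n, e = s(((i, 0) : ZMod n × Fin 2), (i, 1)))

include hn in
lemma zmod_one_ne_zero : (1 : ZMod n) ≠ 0 := by
  have : ((1 : ℕ) : ZMod n) ≠ 0 := by
    rw [Ne, ZMod.natCast_eq_zero_iff]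
    intro h; have := Nat.le_of_dvd one_pos h; omega
  simpa using this

include hn in
lemma zmod_two_ne_zero : (2 : ZMod n) ≠ 0 := by
  have : ((2 : ℕ) : ZMod n) ≠ 0 := by
    rw [Ne, ZMod.natCast_eq_zero_iff]
    intro h; have := Nat.le_of_dvd two_pos h; omega
  simpa using this

include hS in
lemma mem_S_iff (j l : ZMod n) (b c : Fin 2) :
    s(((j, b) : ZMod n × Fin 2), (l, c)) ∈ S ↔
      j = l ∧ b ≠ c ∧ s(((j, 0) : ZMod n × Fin 2), (j, 1)) ∈ S := by
  constructor
  · intro h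
    obtain ⟨i, he⟩ := hS _ h
    rw [Sym2.eq_iff] at he
    rcases he with ⟨h1, h2⟩ | ⟨h1, h2⟩ <;>
      · obtain ⟨rfl, rfl⟩ := Prod.mk.injEq .. ▸ h1
        obtain ⟨rfl, rfl⟩ := Prod.mk.injEq .. ▸ h2
        refine ⟨rfl, by decide, ?_⟩
        simpa [Sym2.eq_swap] using h
  · rintro ⟨rfl, hbc, hdel⟩
    fin_cases b <;> fin_cases c <;> simp_all [Sym2.eq_swap]

include hn hS in
lemma adj_iff (j l : ZMod n) (b c : Fin 2) :
    ((Gn n).deleteEdges ↑S).Adj (j, b) (l, c) ↔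
      ((j = l ∧ b ≠ c ∧ s(((j, 0) : ZMod n × Fin 2), (j, 1)) ∉ S) ∨ j = l + 1 ∨ l = j + 1) := by
  rw [SimpleGraph.deleteEdges_adj]
  have h1 : (1 : ZMod n) ≠ 0 := zmod_one_ne_zero hn
  constructor
  · rintro ⟨⟨hne, hnear⟩, hnotS⟩
    rcases hnear with rfl | h | h
    · have hbc : b ≠ c := fun hbc => hne (by rw [hbc])
      rw [Finset.mem_coe, mem_S_iff hS] at hnotS
      exact Or.inl ⟨rfl, hbc, fun hd => hnotS ⟨rfl, hbc, hd⟩⟩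
    · exact Or.inr (Or.inl h)
    · exact Or.inr (Or.inr h)
  · rintro (⟨rfl, hbc, hdel⟩ | h | h)
    · refine ⟨⟨fun he => hbc (congrArg Prod.snd he), Or.inl rfl⟩, ?_⟩
      rw [Finset.mem_coe, mem_S_iff hS]
      rintro ⟨-, -, hd⟩; exact hdel hd
    · refine ⟨⟨?_, Or.inr (Or.inl h)⟩, ?_⟩
      · intro he
        have : j = l := congrArg Prod.fst he
        rw [this, left_eq_add] at h
        exact h1 h
      · rw [Finset.mem_coe, mem_S_iff hS]
        rintro ⟨rfl, -, -⟩
        rw [left_eq_add] at h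
        exact h1 h
    · refine ⟨⟨?_, Or.inr (Or.inr h)⟩, ?_⟩
      · intro he
        have : j = l := congrArg Prod.fst he
        rw [this, left_eq_add] at h
        exact h1 h
      · rw [Finset.mem_coe, mem_S_iff hS]
        rintro ⟨rfl, -, -⟩
        rw [left_eq_add] at h
        exact h1 h

end GraphAux

set_option linter.unusedSectionVars false

section GraphAux2

variable {n : ℕ} [NeZero n] (hn : 3 ≤ n) {S : Finset (Sym2 (ZMod n × Fin 2))}
variable (hS : ∀ e ∈ S, ∃ i : ZMod n, e = s(((i, 0) : ZMod n × Fin 2), (i, 1)))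

include hn hS in
lemma degree_eq (j : ZMod n) (b : Fin 2) :
    ((((Gn n).deleteEdges ↑S).degree (j, b) : ℝ)) =
      if s(((j, 0) : ZMod n × Fin 2), (j, 1)) ∈ S then 4 else 5 := by
  rw [SimpleGraph.degree_eq_sum_if_adj, Fintype.sum_prod_type]
  have h1 : (1 : ZMod n) ≠ 0 := zmod_one_ne_zero hn
  have h2 : (2 : ZMod n) ≠ 0 := zmod_two_ne_zero hn
  have hrw : ∀ l : ZMod n,
      (∑ c : Fin 2, if ((Gn n).deleteEdges ↑S).Adj (j, b) (l, c) then (1:ℝ) else 0)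
      = (if l = j then (if s(((j, 0) : ZMod n × Fin 2), (j,1)) ∈ S then 0 else 1) else 0)
        + (if l = j - 1 then 2 else 0) + (if l = j + 1 then 2 else 0) := by
    intro l
    rw [Fin.sum_univ_two]
    simp only [adj_iff hn hS]
    by_cases hlj : l = j
    · subst hlj
      have hn1 : ¬ (l = l + 1) := by simpa [left_eq_add] using h1
      have hm1 : ¬ (l = l - 1) := by
        intro h; apply h1; linear_combination h
      by_cases hdel : s(((l, 0) : ZMod n × Fin 2), (l,1)) ∈ S <;>
        fin_cases b <;>
        simp [hn1, hm1, hdel] <;> norm_num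
    · by_cases hlm : l = j - 1
      · subst hlm
        have htrue : j = (j - 1) + 1 := by ring
        have hnp : ¬ (j - 1 = j + 1) := by
          intro h; apply h2; linear_combination -h
        rw [if_pos (Or.inr (Or.inl htrue)), if_pos (Or.inr (Or.inl htrue)),
          if_neg hlj, if_pos rfl, if_neg hnp]
        norm_num
      · by_cases hlp : l = j + 1
        · subst hlp
          rw [if_pos (Or.inr (Or.inr rfl)), if_pos (Or.inr (Or.inr rfl)),
            if_neg hlj, if_neg hlm, if_pos rfl]
          norm_num
        · have hA : ¬ (j = l + 1) := by
            intro h; apply hlm; linear_combination -h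
          rw [if_neg, if_neg, if_neg hlj, if_neg hlm, if_neg hlp]
          · norm_num
          · rintro (⟨h, -⟩ | h | h)
            · exact hlj h.symm
            · exact hA h
            · exact hlp h
          · rintro (⟨h, -⟩ | h | h)
            · exact hlj h.symm
            · exact hA h
            · exact hlp h
  rw [Finset.sum_congr rfl (fun l _ => hrw l)]
  rw [Finset.sum_add_distrib, Finset.sum_add_distrib, Finset.sum_ite_eq',
    Finset.sum_ite_eq', Finset.sum_ite_eq']
  simp only [Finset.mem_univ, if_true]
  split_ifs <;> norm_num

include hn hS in
lemma lap_apply (j l : ZMod n) (b c : Fin 2) :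
    (((Gn n).deleteEdges ↑S).lapMatrix ℝ) (j, b) (l, c) =
      if j = l then
        (if b = c then (if s(((j, 0) : ZMod n × Fin 2), (j,1)) ∈ S then 4 else 5)
         else (if s(((j, 0) : ZMod n × Fin 2), (j,1)) ∈ S then 0 else -1))
      else (if j = l + 1 ∨ l = j + 1 then -1 else 0) := by
  have h1 : (1 : ZMod n) ≠ 0 := zmod_one_ne_zero hn
  rw [SimpleGraph.lapMatrix, Matrix.sub_apply, SimpleGraph.degMatrix,
    Matrix.diagonal_apply, SimpleGraph.adjMatrix_apply]
  by_cases hjl : j = l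
  · subst hjl
    by_cases hbc : b = c
    · subst hbc
      rw [if_pos rfl, if_pos rfl, if_pos rfl,
        if_neg (SimpleGraph.irrefl _), degree_eq hn hS, sub_zero]
    · have hne : ((j, b) : ZMod n × Fin 2) ≠ (j, c) := fun h => hbc (congrArg Prod.snd h)
      rw [if_neg hne, if_pos rfl, if_neg hbc, zero_sub]
      by_cases hdel : s(((j, 0) : ZMod n × Fin 2), (j,1)) ∈ S
      · rw [if_pos hdel, if_neg, neg_zero]
        rw [adj_iff hn hS]
        rintro (⟨-, -, hd⟩ | h | h)
        · exact hd hdel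
        · exact h1 ((left_eq_add).mp h)
        · exact h1 ((left_eq_add).mp h)
      · rw [if_neg hdel, if_pos]
        rw [adj_iff hn hS]
        exact Or.inl ⟨rfl, hbc, hdel⟩
  · have hne : ((j, b) : ZMod n × Fin 2) ≠ (l, c) := fun h => hjl (congrArg Prod.fst h)
    rw [if_neg hne, if_neg hjl, zero_sub]
    by_cases hnear : j = l + 1 ∨ l = j + 1
    · rw [if_pos hnear, if_pos]
      rw [adj_iff hn hS]
      exact Or.inr hnear
    · rw [if_neg hnear, if_neg, neg_zero]
      rw [adj_iff hn hS]
      rintro (⟨h, -⟩ | h | h)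
      · exact hjl h
      · exact hnear (Or.inl h)
      · exact hnear (Or.inr h)

end GraphAux2


noncomputable section CycleAux

open Matrix Complex

variable (n : ℕ) [NeZero n]

def B0c : Matrix (ZMod n) (ZMod n) ℝ := fun j k =>
  (if j = k then 4 else 0) + (if j = k + 1 then -2 else 0) + (if k = j + 1 then -2 else 0)

def zeta : ℂ := Complex.exp (2 * Real.pi * Complex.I / n)

def fz (j : ZMod n) : ℂ := zeta n ^ j.val

variable {n}

lemma hzeta : IsPrimitiveRoot (zeta n) n := Complex.isPrimitiveRoot_exp n (NeZero.ne n)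

lemma zeta_pow_mod (m : ℕ) : zeta n ^ (m % n) = zeta n ^ m := by
  conv_rhs => rw [← Nat.div_add_mod m n]
  rw [pow_add, pow_mul, hzeta.pow_eq_one, one_pow, one_mul]

lemma fz_add (a b : ZMod n) : fz n (a + b) = fz n a * fz n b := by
  rw [fz, fz, fz, ZMod.val_add, zeta_pow_mod, pow_add]

lemma fz_zero : fz n (0 : ZMod n) = 1 := by simp [fz, ZMod.val_zero]

lemma fz_sum (d : ZMod n) : ∑ k : ZMod n, fz n (d * k) = if d = 0 then (n : ℂ) else 0 := by
  by_cases hd : d = 0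
  · subst hd
    simp [fz_zero, Finset.card_univ, ZMod.card]
  · rw [if_neg hd]
    have hfz : ∀ k : ZMod n, fz n (d * k) = (fz n d) ^ k.val := by
      intro k
      rw [fz, fz, ← pow_mul, ZMod.val_mul, zeta_pow_mod]
    rw [Finset.sum_congr rfl fun k _ => hfz k]
    have hre : ∑ k : ZMod n, (fz n d) ^ k.val = ∑ i ∈ Finset.range n, (fz n d) ^ i := by
      refine Finset.sum_nbij' (fun k => k.val) (fun i => (i : ZMod n)) ?_ ?_ ?_ ?_ ?_
      · intro a _; exact Finset.mem_range.mpr (ZMod.val_lt a)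
      · intro a _; exact Finset.mem_univ _
      · intro a _; exact ZMod.natCast_rightInverse a
      · intro a ha; exact ZMod.val_cast_of_lt (Finset.mem_range.mp ha)
      · intro a _; rfl
    rw [hre]
    have hz1 : fz n d ≠ 1 := by
      apply hzeta.pow_ne_one_of_pos_of_lt
      · exact fun h => hd ((ZMod.val_eq_zero d).mp h)
      · exact ZMod.val_lt d
    have hzn : (fz n d) ^ n = 1 := by
      rw [fz, ← pow_mul, mul_comm, pow_mul, hzeta.pow_eq_one, one_pow]
    have := geom_sum_mul (fz n d) n
    rw [hzn, sub_self] at this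
    rcases mul_eq_zero.mp this with h | h
    · exact h
    · exact absurd (sub_eq_zero.mp h) hz1

variable (n)

def Fm : Matrix (ZMod n) (ZMod n) ℂ := fun j k => fz n (j * k)

def Gm : Matrix (ZMod n) (ZMod n) ℂ := fun j k => fz n (-(j * k))

def Dm : Matrix (ZMod n) (ZMod n) ℂ :=
  Matrix.diagonal (fun j => 4 - 2 * fz n j - 2 * fz n (-j))

lemma GF_eq : Gm n * Fm n = (n : ℂ) • (1 : Matrix (ZMod n) (ZMod n) ℂ) := by
  ext j l
  rw [Matrix.mul_apply]
  have h : ∀ k : ZMod n, Gm n j k * Fm n k l = fz n ((l - j) * k) := by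
    intro k
    rw [Gm, Fm, ← fz_add]
    congr 1
    ring
  rw [Finset.sum_congr rfl fun k _ => h k, fz_sum]
  rw [Matrix.smul_apply, Matrix.one_apply]
  by_cases hjl : j = l
  · subst hjl; simp
  · rw [if_neg (fun h => hjl (sub_eq_zero.mp h).symm), if_neg hjl]
    simp

lemma MF_eq : (B0c n).map (algebraMap ℝ ℂ) * Fm n = Fm n * Dm n := by
  ext j l
  rw [Matrix.mul_apply, Dm, Matrix.mul_diagonal]
  have hmap : ∀ k : ZMod n, (B0c n).map (algebraMap ℝ ℂ) j k =
      (if j = k then (4:ℂ) else 0) + (if j = k + 1 then -2 else 0)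
        + (if k = j + 1 then -2 else 0) := by
    intro k
    simp only [B0c, Matrix.map_apply]
    split_ifs <;> norm_num
  simp only [hmap, add_mul, Finset.sum_add_distrib]
  have hc1 : ∀ k : ZMod n, (j = k + 1) = (j - 1 = k) := by
    intro k
    apply propext
    constructor
    · intro h; rw [h]; ring
    · intro h; rw [← h]; ring
  have hc2 : ∀ k : ZMod n, (k = j + 1) = (j + 1 = k) := fun k => propext eq_comm
  simp only [hc1, hc2, ite_mul, zero_mul, Finset.sum_ite_eq, Finset.mem_univ, if_true]
  have e1 : Fm n (j - 1) l = Fm n j l * fz n (-l) := by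
    rw [Fm, Fm, ← fz_add]; congr 1; ring
  have e2 : Fm n (j + 1) l = Fm n j l * fz n l := by
    rw [Fm, Fm, ← fz_add]; congr 1; ring
  rw [e1, e2]
  ring

lemma charpoly_B0c_complex :
    ((B0c n).map (algebraMap ℝ ℂ)).charpoly =
      ∏ j : ZMod n, (X - C (4 - 2 * fz n j - 2 * fz n (-j))) := by
  have hn0 : (n : ℂ) ≠ 0 := Nat.cast_ne_zero.mpr (NeZero.ne n)
  have hQF : ((n : ℂ)⁻¹ • Gm n) * Fm n = 1 := by
    rw [Matrix.smul_mul, GF_eq, smul_smul, inv_mul_cancel₀ hn0, one_smul]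
  have hconj := aux_charpoly_conj (Fm n) ((n : ℂ)⁻¹ • Gm n)
    ((B0c n).map (algebraMap ℝ ℂ)) hQF
  have hQMP : ((n : ℂ)⁻¹ • Gm n) * ((B0c n).map (algebraMap ℝ ℂ)) * Fm n = Dm n := by
    rw [Matrix.mul_assoc, MF_eq, ← Matrix.mul_assoc, hQF, Matrix.one_mul]
  rw [hQMP] at hconj
  rw [← hconj, Dm, aux_charpoly_diagonal]

lemma eig_eq (j : ZMod n) :
    4 - 2 * fz n j - 2 * fz n (-j) =
      ((8 * Real.sin (j.val * Real.pi / n) ^ 2 : ℝ) : ℂ) := by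
  set θ : ℝ := 2 * Real.pi * j.val / n with hθ
  have hfj : fz n j = Complex.exp (θ * Complex.I) := by
    rw [fz, zeta, ← Complex.exp_nat_mul, hθ]
    push_cast
    ring
  have hprod : fz n j * fz n (-j) = 1 := by
    rw [← fz_add]; simp [fz_zero]
  have hfjn : fz n (-j) = Complex.exp (-(θ * Complex.I)) := by
    rw [Complex.exp_neg, ← hfj]
    exact (inv_eq_of_mul_eq_one_right hprod).symm
  rw [hfj, hfjn, neg_mul_eq_neg_mul, Complex.exp_mul_I, Complex.exp_mul_I,
    Complex.cos_neg, Complex.sin_neg]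
  have hre : (8 * Real.sin ((j.val : ℝ) * Real.pi / n) ^ 2 : ℝ) = 4 - 4 * Real.cos θ := by
    rw [Real.sin_sq_eq_half_sub, show 2 * ((j.val : ℝ) * Real.pi / n) = θ by rw [hθ]; ring]
    ring
  rw [hre]
  push_cast [Complex.ofReal_cos]
  ring

lemma charpoly_B0c (hn : 3 ≤ n) :
    (B0c n).charpoly =
      ∏ i ∈ Finset.range n, (X - C (8 * Real.sin (i * Real.pi / n) ^ 2)) := by
  apply Polynomial.map_injective (algebraMap ℝ ℂ) (algebraMap ℝ ℂ).injective
  rw [← Matrix.charpoly_map, charpoly_B0c_complex, Polynomial.map_prod]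
  simp only [Polynomial.map_sub, Polynomial.map_X, Polynomial.map_C]
  rw [Finset.prod_congr rfl fun j _ => by rw [eig_eq]]
  refine Finset.prod_nbij' (fun (k : ZMod n) => k.val) (fun i => (i : ZMod n)) ?_ ?_ ?_ ?_ ?_
  · intro a _; exact Finset.mem_range.mpr (ZMod.val_lt a)
  · intro a _; exact Finset.mem_univ _
  · intro a _; exact ZMod.natCast_rightInverse a
  · intro a ha; exact ZMod.val_cast_of_lt (Finset.mem_range.mp ha)
  · intro a _; rfl

end CycleAux

noncomputable section Assembly

open Matrix

variable (n : ℕ) (S : Finset (Sym2 (ZMod n × Fin 2)))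

def hh : Fin 2 → Fin 2 → ℝ := fun b c => if b = 1 ∧ c = 1 then -1 else 1

def Pm : Matrix (ZMod n × Fin 2) (ZMod n × Fin 2) ℝ :=
  fun v w => if v.1 = w.1 then hh v.2 w.2 else 0

def B1c : Matrix (ZMod n) (ZMod n) ℝ :=
  Matrix.diagonal (fun j => if s(((j, 0) : ZMod n × Fin 2), (j, 1)) ∈ S then 4 else 6)

def Bl : Matrix (ZMod n × Fin 2) (ZMod n × Fin 2) ℝ := fun v w =>
  if v.2 = 0 ∧ w.2 = 0 then B0c n v.1 w.1
  else if v.2 = 1 ∧ w.2 = 1 then B1c n S v.1 w.1 else 0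

def eV : (ZMod n × Fin 2) ≃ (ZMod n ⊕ ZMod n) where
  toFun v := if v.2 = 0 then Sum.inl v.1 else Sum.inr v.1
  invFun s := Sum.elim (fun j => (j, 0)) (fun j => (j, 1)) s
  left_inv := by rintro ⟨j, b⟩; fin_cases b <;> simp
  right_inv := by rintro (j | j) <;> simp

lemma PP_eq [NeZero n] : Pm n * Pm n = (2 : ℝ) • 1 := by
  ext ⟨j, b⟩ ⟨l, d⟩
  rw [Matrix.mul_apply, Fintype.sum_prod_type]
  by_cases hjl : j = l
  · subst hjl
    rw [Finset.sum_eq_single j (fun k _ hkj => Finset.sum_eq_zero fun c _ => by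
        simp [Pm, (hkj.symm : ¬ j = k)])
      (fun h => absurd (Finset.mem_univ _) h)]
    rw [Fin.sum_univ_two, Matrix.smul_apply, Matrix.one_apply]
    fin_cases b <;> fin_cases d <;> simp [Pm, hh, Prod.ext_iff] <;> norm_num
  · rw [Matrix.smul_apply, Matrix.one_apply, if_neg (by simp [Prod.ext_iff, hjl]), smul_zero]
    refine Finset.sum_eq_zero fun k _ => Finset.sum_eq_zero fun c _ => ?_
    by_cases h1 : j = k
    · subst h1
      simp [Pm, hjl]
    · simp [Pm, h1]

variable {n S}

lemma LP_eq [NeZero n] (hn : 3 ≤ n)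
    (hS : ∀ e ∈ S, ∃ i : ZMod n, e = s(((i, 0) : ZMod n × Fin 2), (i, 1))) :
    ((Gn n).deleteEdges ↑S).lapMatrix ℝ * Pm n = Pm n * Bl n S := by
  have h1 : (1 : ZMod n) ≠ 0 := zmod_one_ne_zero hn
  have h2 : (2 : ZMod n) ≠ 0 := zmod_two_ne_zero hn
  ext ⟨j, b⟩ ⟨l, d⟩
  rw [Matrix.mul_apply, Matrix.mul_apply, Fintype.sum_prod_type, Fintype.sum_prod_type]
  have hL : (∑ k : ZMod n, ∑ c : Fin 2,
      ((Gn n).deleteEdges ↑S).lapMatrix ℝ (j, b) (k, c) * Pm n (k, c) (l, d))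
      = ∑ c : Fin 2, ((Gn n).deleteEdges ↑S).lapMatrix ℝ (j, b) (l, c) * Pm n (l, c) (l, d) :=
    Finset.sum_eq_single l
      (fun k _ hkl => Finset.sum_eq_zero fun c _ => by simp [Pm, hkl])
      (fun h => absurd (Finset.mem_univ _) h)
  have hR : (∑ k : ZMod n, ∑ c : Fin 2, Pm n (j, b) (k, c) * Bl n S (k, c) (l, d))
      = ∑ c : Fin 2, Pm n (j, b) (j, c) * Bl n S (j, c) (l, d) :=
    Finset.sum_eq_single j
      (fun k _ hkj => Finset.sum_eq_zero fun c _ => by simp [Pm, (hkj.symm : ¬ j = k)])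
      (fun h => absurd (Finset.mem_univ _) h)
  rw [hL, hR, Fin.sum_univ_two, Fin.sum_univ_two]
  simp only [lap_apply hn hS]
  by_cases hjl : j = l
  · subst hjl
    have hn1 : ¬ (j = j + 1) := fun h => h1 ((left_eq_add).mp h)
    by_cases hdel : s(((j, 0) : ZMod n × Fin 2), (j, 1)) ∈ S <;>
      fin_cases b <;> fin_cases d <;>
      simp [Pm, Bl, B0c, B1c, hh, hdel, hn1, Matrix.diagonal_apply] <;>
      norm_num
  · by_cases hA : j = l + 1
    · have hB : ¬ (l = j + 1) := fun hc => h2 (by linear_combination - hA - hc)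
      have hB2 : ¬ (l = l + 1 + 1) := fun h => hB (by rw [hA]; exact h)
      fin_cases b <;> fin_cases d <;>
        simp [Pm, Bl, B0c, B1c, hh, hjl, hA, hB, hB2, h1, Matrix.diagonal_apply,
          fun h : l = j => hjl h.symm] <;>
        norm_num
    · by_cases hB : l = j + 1
      · have hA2 : ¬ (j = j + 1 + 1) := fun h => hA (by rw [hB]; exact h)
        fin_cases b <;> fin_cases d <;>
          simp [Pm, Bl, B0c, B1c, hh, hjl, hA, hB, hA2, h1, Matrix.diagonal_apply,
            fun h : l = j => hjl h.symm] <;>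
          norm_num
      · fin_cases b <;> fin_cases d <;>
          simp [Pm, Bl, B0c, B1c, hh, hjl, hA, hB, Matrix.diagonal_apply,
            fun h : l = j => hjl h.symm]

end Assembly

/-- Let `n ≥ 3` and let `S` be any set of `r` vertical edges of
`G_n = P₂ ⊠ C_n` (the vertical edges being the edges joining `(i,0)` and `(i,1)`), where
`0 ≤ r ≤ n`. Then the characteristic polynomial of the Laplacian matrix of the graph `G_n^r`
obtained from `G_n` by deleting the edges of `S` factors over `ℝ` as
`(X − 4)^r · (X − 6)^(n−r) · ∏_{i=0}^{n−1} (X − 8·sin²(iπ/n))`, independently of `S`. -/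
theorem charpoly_lapMatrix_Gn_deleteVerticalEdges (n r : ℕ) [NeZero n] (hn : 3 ≤ n)
    (hr : r ≤ n) (S : Finset (Sym2 (ZMod n × Fin 2)))
    (hS : ∀ e ∈ S, ∃ i : ZMod n, e = s(((i, 0) : ZMod n × Fin 2), (i, 1)))
    (hcard : S.card = r) :
    (((Gn n).deleteEdges ↑S).lapMatrix ℝ).charpoly =
      (X - C (4 : ℝ)) ^ r * (X - C (6 : ℝ)) ^ (n - r) *
        ∏ i ∈ Finset.range n, (X - C (8 * Real.sin (i * Real.pi / n) ^ 2)) := by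
  classical
  set L := ((Gn n).deleteEdges ↑S).lapMatrix ℝ with hLdef
  have hQP : ((2 : ℝ)⁻¹ • Pm n) * Pm n = (1 : Matrix (ZMod n × Fin 2) (ZMod n × Fin 2) ℝ) := by
    rw [Matrix.smul_mul, PP_eq, smul_smul]
    norm_num
  have hQLP : ((2 : ℝ)⁻¹ • Pm n) * L * Pm n = Bl n S := by
    rw [Matrix.mul_assoc, hLdef, LP_eq hn hS, ← Matrix.mul_assoc, hQP, Matrix.one_mul]
  have hcp : L.charpoly = (Bl n S).charpoly := by
    rw [← hQLP, aux_charpoly_conj _ _ _ hQP]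
  have hblock : (Matrix.reindex (eV n) (eV n) (Bl n S)) =
      Matrix.fromBlocks (B0c n) 0 0 (B1c n S) := by
    ext x y
    cases x <;> cases y <;>
      simp [Matrix.reindex_apply, Matrix.submatrix_apply, eV, Bl, Matrix.fromBlocks]
  have h3 : (Bl n S).charpoly = (B0c n).charpoly * (B1c n S).charpoly := by
    rw [← Matrix.charpoly_reindex (eV n), hblock, Matrix.charpoly_fromBlocks_zero₂₁]
  -- cardinality of the deleted set
  have hinj : Function.Injective
      (fun j : ZMod n => s(((j, 0) : ZMod n × Fin 2), (j, 1))) := by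
    intro i j hij
    simp only [Sym2.eq_iff] at hij
    rcases hij with ⟨h, -⟩ | ⟨h, -⟩
    · exact congrArg Prod.fst h
    · simpa using congrArg Prod.snd h
  have hSimage : S = (Finset.univ.filter
      (fun j : ZMod n => s(((j, 0) : ZMod n × Fin 2), (j, 1)) ∈ S)).image
      (fun j : ZMod n => s(((j, 0) : ZMod n × Fin 2), (j, 1))) := by
    ext e
    simp only [Finset.mem_image, Finset.mem_filter, Finset.mem_univ, true_and]
    constructor
    · intro he
      obtain ⟨i, rfl⟩ := hS e he
      exact ⟨i, he, rfl⟩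
    · rintro ⟨i, hi, rfl⟩
      exact hi
  have hTcard : (Finset.univ.filter
      (fun j : ZMod n => s(((j, 0) : ZMod n × Fin 2), (j, 1)) ∈ S)).card = r := by
    rw [← hcard]
    conv_rhs => rw [hSimage]
    rw [Finset.card_image_of_injective _ hinj]
  have hTccard : (Finset.univ.filter
      (fun j : ZMod n => ¬ (s(((j, 0) : ZMod n × Fin 2), (j, 1)) ∈ S))).card = n - r := by
    have hsum := Finset.card_filter_add_card_filter_not
      (s := (Finset.univ : Finset (ZMod n)))
      (p := fun j : ZMod n => s(((j, 0) : ZMod n × Fin 2), (j, 1)) ∈ S)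
    rw [Finset.card_univ, ZMod.card, hTcard] at hsum
    omega
  have h4 : (B1c n S).charpoly = (X - C (4 : ℝ)) ^ r * (X - C (6 : ℝ)) ^ (n - r) := by
    rw [B1c, aux_charpoly_diagonal]
    rw [Finset.prod_congr rfl (fun j _ => show
      (X - C (if s(((j, 0) : ZMod n × Fin 2), (j, 1)) ∈ S then (4:ℝ) else 6)) =
        (if s(((j, 0) : ZMod n × Fin 2), (j, 1)) ∈ S then X - C (4:ℝ) else X - C 6)
      from by split_ifs <;> rfl)]
    rw [Finset.prod_ite, Finset.prod_const, Finset.prod_const, hTcard, hTccard]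
  rw [hcp, h3, charpoly_B0c n hn, h4]
  ring
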